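/- Let 0 < r ≤ 1 and let f be a harmonic function on the disc D_r of radius r such that f(y) − (1/4π) log|y|² > 0 for all 0 < |y| ≤ r. Then there exists ε₀ > 0 such that for all 0 < ε < ε₀ the function V₀ + f(y)/ε is strictly positive on (D_r × ℝ) \ ({0} × εℤ). -/

import Mathlib

open Real Filter Metric


lemma stmt4_sum_range (F : ℤ → ℝ) (m : ℤ) :
    ∀ N : ℕ, ∑ n ∈ Finset.Icc m (m + N - 1), F n = ∑ k ∈ Finset.range N, F (m + k) := by
  intro N
  induction N with
  | zero => simp [Finset.Icc_eq_empty_of_lt (by omega : m + (0:ℕ) - 1 < m)]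
  | succ N ih =>
    have h1 : Finset.Icc m (m + (N+1:ℕ) - 1) = insert (m + N) (Finset.Icc m (m + N - 1)) := by
      ext x; simp only [Finset.mem_Icc, Finset.mem_insert]; push_cast; omega
    have h2 : (m + (N:ℤ)) ∉ Finset.Icc m (m + (N:ℤ) - 1) := by
      simp only [Finset.mem_Icc]; omega
    rw [h1, Finset.sum_insert h2, Finset.sum_range_succ, ih]
    ring

lemma stmt4_sum_symm (b : ℤ → ℝ) :
    ∀ j : ℕ, ∑ n ∈ Finset.Icc (-(j:ℤ)) (j:ℤ), b |n| =
      b 0 + 2 * ∑ n ∈ Finset.Icc (1:ℤ) (j:ℤ), b n := by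
  intro j
  induction j with
  | zero => simp
  | succ j ih =>
    have h1 : Finset.Icc (-(j+1:ℕ):ℤ) ((j+1:ℕ):ℤ) =
        insert (-(j:ℤ)-1) (insert ((j:ℤ)+1) (Finset.Icc (-(j:ℤ)) (j:ℤ))) := by
      ext x; simp only [Finset.mem_Icc, Finset.mem_insert]; push_cast; omega
    have h2 : (-(j:ℤ)-1) ∉ insert ((j:ℤ)+1) (Finset.Icc (-(j:ℤ)) (j:ℤ)) := by
      simp only [Finset.mem_insert, Finset.mem_Icc]; omega
    have h3 : ((j:ℤ)+1) ∉ Finset.Icc (-(j:ℤ)) (j:ℤ) := by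
      simp only [Finset.mem_Icc]; omega
    have h5 : ((j:ℤ)+1) ∉ Finset.Icc (1:ℤ) (j:ℤ) := by
      simp only [Finset.mem_Icc]; omega
    have h4 : Finset.Icc (1:ℤ) ((j+1:ℕ):ℤ) = insert ((j:ℤ)+1) (Finset.Icc (1:ℤ) (j:ℤ)) := by
      ext x; simp only [Finset.mem_Icc, Finset.mem_insert]; push_cast; omega
    rw [h1, Finset.sum_insert h2, Finset.sum_insert h3, h4, Finset.sum_insert h5, ih]
    have e1 : |(-(j:ℤ)-1)| = (j:ℤ)+1 := by
      rw [abs_of_nonpos (by omega)]; ring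
    have e2 : |((j:ℤ)+1)| = (j:ℤ)+1 := abs_of_nonneg (by omega)
    rw [e1, e2]; ring

lemma stmt4_harmonic_cast (j : ℕ) :
    ∑ n ∈ Finset.Icc (1:ℤ) (j:ℤ), 1/((n:ℝ)) = (harmonic j : ℝ) := by
  have h := stmt4_sum_range (fun n : ℤ => 1/((n:ℝ))) 1 j
  have e : (1:ℤ) + (j:ℤ) - 1 = (j:ℤ) := by ring
  rw [e] at h
  rw [h, harmonic]
  push_cast
  refine Finset.sum_congr rfl fun k _ => ?_
  rw [one_div, add_comm]

lemma stmt4_intble (ρ a b : ℝ) (h : ∀ s ∈ Set.uIcc a b, 0 < s^2 + ρ^2) :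
    IntervalIntegrable (fun s : ℝ => 1 / Real.sqrt (s^2 + ρ^2)) MeasureTheory.volume a b := by
  apply ContinuousOn.intervalIntegrable
  apply ContinuousOn.div continuousOn_const
  · exact (Real.continuous_sqrt.comp (by continuity)).continuousOn
  · intro s hs
    exact (Real.sqrt_pos.2 (h s hs)).ne'

lemma stmt4_ftc (ρ a b : ℝ) (hab : a ≤ b) (ha : 0 ≤ a) (h0 : 0 < a^2 + ρ^2) :
    ∫ s in a..b, 1 / Real.sqrt (s^2 + ρ^2) =
      Real.log (b + Real.sqrt (b^2 + ρ^2)) - Real.log (a + Real.sqrt (a^2 + ρ^2)) := by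
  have hpos : ∀ s ∈ Set.uIcc a b, 0 < s^2 + ρ^2 := by
    intro s hs
    rw [Set.uIcc_of_le hab] at hs
    have h1 : a ≤ s := hs.1
    nlinarith [hs.1, hs.2]
  apply intervalIntegral.integral_eq_sub_of_hasDerivAt
  · intro x hx
    have hx0 : 0 ≤ x := by
      rw [Set.uIcc_of_le hab] at hx; linarith [hx.1]
    have hxpos : 0 < x^2 + ρ^2 := hpos x hx
    have hq : 0 < Real.sqrt (x^2 + ρ^2) := Real.sqrt_pos.2 hxpos
    have h1 : HasDerivAt (fun s : ℝ => s^2 + ρ^2) (2*x) x := by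
      simpa using (hasDerivAt_pow 2 x).add_const (ρ^2)
    have h2 : HasDerivAt (fun s : ℝ => Real.sqrt (s^2 + ρ^2))
        (1 / (2 * Real.sqrt (x^2 + ρ^2)) * (2*x)) x :=
      (Real.hasDerivAt_sqrt hxpos.ne').comp x h1
    have h3 : HasDerivAt (fun s : ℝ => s + Real.sqrt (s^2 + ρ^2))
        (1 + 1 / (2 * Real.sqrt (x^2 + ρ^2)) * (2*x)) x :=
      (hasDerivAt_id x).add h2
    have hxq : 0 < x + Real.sqrt (x^2 + ρ^2) := by linarith
    have h4 := h3.log hxq.ne'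
    refine h4.congr_deriv ?_
    rw [div_eq_iff hxq.ne']
    field_simp
    ring
  · exact stmt4_intble ρ a b hpos

lemma stmt4_step (ρ x ε : ℝ) (hx : 0 ≤ x) (hε : 0 < ε) (h0 : 0 < x^2 + ρ^2) :
    ∫ s in x..(x+ε), 1 / Real.sqrt (s^2 + ρ^2) ≤ ε * (1 / Real.sqrt (x^2 + ρ^2)) := by
  have hpos : ∀ s ∈ Set.uIcc x (x+ε), 0 < s^2 + ρ^2 := by
    intro s hs
    rw [Set.uIcc_of_le (by linarith)] at hs
    nlinarith [hs.1, hs.2]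
  have hle : x ≤ x + ε := by linarith
  calc ∫ s in x..(x+ε), 1 / Real.sqrt (s^2 + ρ^2)
      ≤ ∫ _ in x..(x+ε), 1 / Real.sqrt (x^2 + ρ^2) := by
        apply intervalIntegral.integral_mono_on hle (stmt4_intble ρ x (x+ε) hpos)
          intervalIntegrable_const
        intro s hs
        have hq : 0 < Real.sqrt (x^2 + ρ^2) := Real.sqrt_pos.2 h0
        apply one_div_le_one_div_of_le hq
        apply Real.sqrt_le_sqrt
        nlinarith [hs.1, hs.2]
    _ = ε * (1 / Real.sqrt (x^2 + ρ^2)) := by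
        rw [intervalIntegral.integral_const, smul_eq_mul, add_sub_cancel_left]

lemma stmt4_sum_lb (ρ u ε : ℝ) (hε : 0 < ε) (m M : ℤ) (hmM : m ≤ M)
    (hm : 0 ≤ u + m*ε) (h0 : 0 < (u + m*ε)^2 + ρ^2) :
    Real.log ((u + ((M:ℝ)+1)*ε) + Real.sqrt ((u + ((M:ℝ)+1)*ε)^2 + ρ^2)) -
      Real.log ((u + (m:ℝ)*ε) + Real.sqrt ((u + (m:ℝ)*ε)^2 + ρ^2)) ≤
    ε * ∑ n ∈ Finset.Icc m M, 1 / Real.sqrt ((u + (n:ℝ)*ε)^2 + ρ^2) := by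
  set N : ℕ := (M + 1 - m).toNat with hN
  have hNM : (N:ℤ) = M + 1 - m := by omega
  set A : ℕ → ℝ := fun k => u + ((m:ℝ) + k)*ε with hA
  have hA0 : ∀ k : ℕ, 0 ≤ A k := by
    intro k
    have : (0:ℝ) ≤ (k:ℝ)*ε := by positivity
    simp only [hA]; nlinarith
  have hApos : ∀ k : ℕ, 0 < (A k)^2 + ρ^2 := by
    intro k
    have h1 : u + m*ε ≤ A k := by
      have : (0:ℝ) ≤ (k:ℝ)*ε := by positivity
      simp only [hA]; nlinarith
    nlinarith [hA0 k, hm]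
  have hAs : ∀ k : ℕ, A (k+1) = A k + ε := by
    intro k; simp only [hA]; push_cast; ring
  have hint : ∀ k : ℕ, IntervalIntegrable (fun s : ℝ => 1 / Real.sqrt (s^2 + ρ^2))
      MeasureTheory.volume (A k) (A (k+1)) := by
    intro k
    apply stmt4_intble
    intro s hs
    rw [Set.uIcc_of_le (by rw [hAs]; linarith)] at hs
    nlinarith [hs.1, hs.2, hA0 k, hApos k]
  have hsplit := intervalIntegral.sum_integral_adjacent_intervals
    (f := fun s : ℝ => 1 / Real.sqrt (s^2 + ρ^2)) (a := A) (n := N) (fun k _ => hint k)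
  have hftc := stmt4_ftc ρ (A 0) (A N) (by
      simp only [hA]
      have h' : (0:ℝ) ≤ (N:ℝ)*ε := by positivity
      push_cast
      nlinarith) (hA0 0) (by simpa [hA] using h0)
  have hstepk : ∀ k ∈ Finset.range N,
      (∫ s in (A k)..(A (k+1)), 1 / Real.sqrt (s^2 + ρ^2)) ≤
        ε * (1 / Real.sqrt ((A k)^2 + ρ^2)) := by
    intro k _
    have := stmt4_step ρ (A k) ε (hA0 k) hε (hApos k)
    rwa [hAs k]
  have hsum1 : (∫ s in (A 0)..(A N), 1 / Real.sqrt (s^2 + ρ^2)) ≤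
      ∑ k ∈ Finset.range N, ε * (1 / Real.sqrt ((A k)^2 + ρ^2)) := by
    rw [← hsplit]
    exact Finset.sum_le_sum hstepk
  have hre : ∑ n ∈ Finset.Icc m M, 1 / Real.sqrt ((u + (n:ℝ)*ε)^2 + ρ^2) =
      ∑ k ∈ Finset.range N, 1 / Real.sqrt ((A k)^2 + ρ^2) := by
    have := stmt4_sum_range (fun n : ℤ => 1 / Real.sqrt ((u + (n:ℝ)*ε)^2 + ρ^2)) m N
    have e : m + (N:ℤ) - 1 = M := by omega
    rw [e] at this
    rw [this]
    refine Finset.sum_congr rfl fun k _ => ?_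
    simp only [hA]; push_cast; ring_nf
  have hA0e : A 0 = u + (m:ℝ)*ε := by simp [hA]
  have hANe : A N = u + ((M:ℝ)+1)*ε := by
    simp only [hA]
    have h' : (m:ℝ) + (N:ℝ) = (M:ℝ) + 1 := by
      exact_mod_cast congrArg (fun z : ℤ => (z:ℝ)) (by omega : m + (N:ℤ) = M + 1)
    rw [h']
  rw [hre]
  rw [← Finset.mul_sum] at hsum1
  calc Real.log ((u + ((M:ℝ)+1)*ε) + Real.sqrt ((u + ((M:ℝ)+1)*ε)^2 + ρ^2)) -
      Real.log ((u + (m:ℝ)*ε) + Real.sqrt ((u + (m:ℝ)*ε)^2 + ρ^2))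
      = ∫ s in (A 0)..(A N), 1 / Real.sqrt (s^2 + ρ^2) := by rw [hftc, hA0e, hANe]
    _ ≤ _ := hsum1

lemma stmt4_loglim (ε v : ℝ) (hε : 0 < ε) :
    Tendsto (fun j : ℕ => Real.log (2*(v + ((j:ℝ)+1)*ε)) - Real.log j) atTop
      (nhds (Real.log (2*ε))) := by
  have h1 : Tendsto (fun j : ℕ => 2*ε + (2*v + 2*ε)/j) atTop (nhds (2*ε)) := by
    have := tendsto_const_div_atTop_nhds_zero_nat (2*v + 2*ε)
    simpa using (tendsto_const_nhds (x := 2*ε)).add this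
  have h2 : Tendsto (fun j : ℕ => Real.log (2*ε + (2*v + 2*ε)/j)) atTop
      (nhds (Real.log (2*ε))) :=
    ((Real.continuousAt_log (by positivity)).tendsto).comp h1
  apply h2.congr'
  have hev : ∀ᶠ j : ℕ in atTop, (-(2*v) ≤ (j:ℝ)*ε) ∧ 1 ≤ j := by
    have ha : Tendsto (fun j : ℕ => (j:ℝ)*ε) atTop atTop :=
      tendsto_natCast_atTop_atTop.atTop_mul_const hε
    exact (ha.eventually_ge_atTop (-(2*v))).and (eventually_ge_atTop 1)
  filter_upwards [hev] with j hj
  have hj1 : (1:ℝ) ≤ (j:ℝ) := by exact_mod_cast hj.2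
  have hj0 : (j:ℝ) ≠ 0 := by linarith
  have harg : 0 < 2*(v + ((j:ℝ)+1)*ε) := by nlinarith [hj.1, hε]
  rw [← Real.log_div harg.ne' hj0]
  congr 1
  field_simp
  ring

set_option maxHeartbeats 1000000 in
lemma stmt4_key (aa : ℝ → ℤ → ℝ) (ε : ℝ) (hε : 0 < ε)
    (ha0 : aa ε 0 = 2 * (-Real.eulerMascheroniConstant + Real.log (2 * ε)) / ε)
    (ha : ∀ n : ℤ, n ≠ 0 → aa ε n = 1 / ((|n| : ℝ) * ε))
    (u ρ V : ℝ) (hρ0 : 0 ≤ ρ)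
    (hexc : 0 < ρ ∨ ¬ ∃ n : ℤ, u = (n : ℝ) * ε)
    (hT : Tendsto (fun j : ℕ => (1 / (4 * π)) * ∑ n ∈ Finset.Icc (-(j : ℤ)) (j : ℤ),
        (1 / Real.sqrt ((u + (n : ℝ) * ε) ^ 2 + ρ ^ 2) - aa ε |n|)) atTop (nhds V)) :
    -(Real.log (ε + ρ) / (2 * π * ε)) ≤ V := by
  have hπ : (0:ℝ) < π := Real.pi_pos
  set n₀ : ℤ := ⌊-u/ε⌋ with hn₀def
  have hl : (n₀:ℝ)*ε ≤ -u := by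
    have := Int.floor_le (-u/ε)
    rw [← le_div_iff₀ hε]; exact this
  have hr : -u < ((n₀:ℝ)+1)*ε := by
    have := Int.lt_floor_add_one (-u/ε)
    rw [← div_lt_iff₀ hε]; exact this
  set α : ℝ := -u - (n₀:ℝ)*ε with hαdef
  set β : ℝ := u + ((n₀:ℝ)+1)*ε with hβdef
  have hα0 : 0 ≤ α := by simp only [hαdef]; linarith
  have hβ0 : 0 < β := by simp only [hβdef]; linarith
  have hαβ : α + β = ε := by simp only [hαdef, hβdef]; ring
  have hαpos : 0 < α ∨ 0 < ρ := by
    rcases hexc with h | h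
    · right; exact h
    · left
      rcases hα0.lt_or_eq with h' | h'
      · exact h'
      · exfalso
        exact h ⟨-n₀, by push_cast; simp only [hαdef] at h'; linarith⟩
  have h2α : 0 < 2*α + ρ := by rcases hαpos with h|h <;> linarith
  have h2β : 0 < 2*β + ρ := by linarith
  have hαq : 0 < α^2 + ρ^2 := by rcases hαpos with h|h <;> nlinarith
  have hβq : 0 < β^2 + ρ^2 := by nlinarith
  set C : ℝ := Real.log ((2*α+ρ)*(2*β+ρ)) with hCdef
  set Bseq : ℕ → ℝ := fun j => (1/(4*π)) *
      ((Real.log (2*(u + ((j:ℝ)+1)*ε)) - Real.log j +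
        (Real.log (2*(-u + ((j:ℝ)+1)*ε)) - Real.log j - C - ε * aa ε 0 -
        2*((harmonic j : ℝ) - Real.log j))) / ε) with hBdef
  have hBlim : Tendsto Bseq atTop (nhds (-(C/(4*π*ε)))) := by
    have l1 := stmt4_loglim ε u hε
    have l2 := stmt4_loglim ε (-u) hε
    have l3 : Tendsto (fun j : ℕ => (harmonic j : ℝ) - Real.log j) atTop
        (nhds Real.eulerMascheroniConstant) := Real.tendsto_harmonic_sub_log
    have h := ((l1.add (((l2.sub_const C).sub_const (ε * aa ε 0)).sub
        (l3.const_mul 2))).div_const ε).const_mul (1/(4*π))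
    have hval : (1/(4*π)) * ((Real.log (2*ε) + (Real.log (2*ε) - C - ε * aa ε 0 -
        2*Real.eulerMascheroniConstant)) / ε) = -(C/(4*π*ε)) := by
      rw [ha0]
      field_simp
      ring
    rw [hval] at h
    apply h.congr
    intro j
    simp only [hBdef]
  have hSB : ∀ᶠ j in atTop, Bseq j ≤ (1 / (4 * π)) * ∑ n ∈ Finset.Icc (-(j : ℤ)) (j : ℤ),
      (1 / Real.sqrt ((u + (n : ℝ) * ε) ^ 2 + ρ ^ 2) - aa ε |n|) := by
    rw [eventually_atTop]
    refine ⟨(n₀+1).toNat + (-n₀).toNat + 1, fun j hj => ?_⟩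
    have hj1 : n₀ + 1 ≤ (j:ℤ) := by omega
    have hj2 : -(j:ℤ) ≤ n₀ := by omega
    have hj1R : (n₀:ℝ) + 1 ≤ (j:ℝ) := by exact_mod_cast hj1
    have hj2R : -(n₀:ℝ) ≤ (j:ℝ) := by
      have h' : (-n₀ : ℤ) ≤ (j:ℤ) := by omega
      exact_mod_cast h'
    rw [Finset.sum_sub_distrib]
    have hasum : ∑ n ∈ Finset.Icc (-(j:ℤ)) (j:ℤ), aa ε |n| =
        aa ε 0 + 2 * ((harmonic j : ℝ) / ε) := by
      rw [stmt4_sum_symm (fun n => aa ε n) j]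
      congr 1
      have he : ∑ n ∈ Finset.Icc (1:ℤ) (j:ℤ), aa ε n =
          ∑ n ∈ Finset.Icc (1:ℤ) (j:ℤ), (1/(n:ℝ)) * (1/ε) := by
        refine Finset.sum_congr rfl fun n hn => ?_
        simp only [Finset.mem_Icc] at hn
        have hn0 : (0:ℝ) < (n:ℝ) := by exact_mod_cast (by omega : (0:ℤ) < n)
        rw [ha n (by omega), abs_of_pos hn0, one_div, one_div, one_div, mul_inv]
      rw [he, ← Finset.sum_mul, stmt4_harmonic_cast]
      ring
    rw [hasum]
    have hdisj : Disjoint (Finset.Icc (-(j:ℤ)) n₀) (Finset.Icc (n₀+1) (j:ℤ)) := by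
      rw [Finset.disjoint_left]
      intro x hx1 hx2
      simp only [Finset.mem_Icc] at hx1 hx2
      omega
    have hsplit : ∑ n ∈ Finset.Icc (-(j:ℤ)) (j:ℤ),
          1 / Real.sqrt ((u + (n : ℝ) * ε) ^ 2 + ρ ^ 2) =
        (∑ n ∈ Finset.Icc (-(j:ℤ)) n₀, 1 / Real.sqrt ((u + (n : ℝ) * ε) ^ 2 + ρ ^ 2)) +
        ∑ n ∈ Finset.Icc (n₀+1) (j:ℤ), 1 / Real.sqrt ((u + (n : ℝ) * ε) ^ 2 + ρ ^ 2) := by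
      rw [← Finset.sum_union hdisj]
      congr 1
      ext x
      simp only [Finset.mem_union, Finset.mem_Icc]
      omega
    have himg : Finset.Icc (-(j:ℤ)) n₀ = Finset.image Neg.neg (Finset.Icc (-n₀) (j:ℤ)) := by
      ext x
      simp only [Finset.mem_image, Finset.mem_Icc]
      constructor
      · intro h
        exact ⟨-x, by omega, by ring⟩
      · rintro ⟨y, hy, rfl⟩
        omega
    have hneg : ∑ n ∈ Finset.Icc (-(j:ℤ)) n₀, 1 / Real.sqrt ((u + (n : ℝ) * ε) ^ 2 + ρ ^ 2) =
        ∑ p ∈ Finset.Icc (-n₀) (j:ℤ), 1 / Real.sqrt ((-u + (p : ℝ) * ε) ^ 2 + ρ ^ 2) := by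
      rw [himg, Finset.sum_image (by intro x _ y _ h; omega)]
      refine Finset.sum_congr rfl fun p _ => ?_
      have he : (u + ((-p : ℤ) : ℝ) * ε)^2 = (-u + (p:ℝ) * ε)^2 := by push_cast; ring
      rw [he]
    rw [hsplit, hneg]
    have hR := stmt4_sum_lb ρ u ε hε (n₀+1) (j:ℤ) hj1
      (by push_cast; linarith [hβ0])
      (by push_cast; nlinarith [hβ0, sq_nonneg ρ])
    have hL := stmt4_sum_lb ρ (-u) ε hε (-n₀) (j:ℤ) (by omega)
      (by push_cast; linarith [hα0])
      (by push_cast; nlinarith [hαq])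
    have eβ : u + (((n₀+1 : ℤ)):ℝ)*ε = β := by push_cast; simp only [hβdef]
    have eα : -u + (((-n₀ : ℤ)):ℝ)*ε = α := by push_cast; simp only [hαdef]; ring
    have eRj : u + ((((j:ℤ)):ℝ)+1)*ε = u + ((j:ℝ)+1)*ε := by push_cast; ring
    have eLj : -u + ((((j:ℤ)):ℝ)+1)*ε = -u + ((j:ℝ)+1)*ε := by push_cast; ring
    rw [eβ, eRj] at hR
    rw [eα, eLj] at hL
    set Rj : ℝ := u + ((j:ℝ)+1)*ε with hRjdef
    set Lj : ℝ := -u + ((j:ℝ)+1)*ε with hLjdef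
    have hRj0 : 0 < Rj := by simp only [hRjdef]; nlinarith
    have hLj0 : 0 < Lj := by simp only [hLjdef]; nlinarith
    -- log estimates
    have sqrt_ge : ∀ x : ℝ, 0 < x → x + x ≤ x + Real.sqrt (x^2 + ρ^2) := by
      intro x hx
      have h1 : Real.sqrt (x^2) ≤ Real.sqrt (x^2 + ρ^2) := Real.sqrt_le_sqrt (by nlinarith)
      rw [Real.sqrt_sq hx.le] at h1
      linarith
    have sqrt_le : ∀ x : ℝ, 0 ≤ x → Real.sqrt (x^2 + ρ^2) ≤ x + ρ := by
      intro x hx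
      have h1 : Real.sqrt (x^2 + ρ^2) ≤ Real.sqrt ((x+ρ)^2) := Real.sqrt_le_sqrt (by nlinarith)
      rwa [Real.sqrt_sq (by linarith)] at h1
    have hlog2R : Real.log (2*Rj) ≤ Real.log (Rj + Real.sqrt (Rj^2 + ρ^2)) := by
      apply Real.log_le_log (by linarith)
      have := sqrt_ge Rj hRj0
      linarith
    have hlog2L : Real.log (2*Lj) ≤ Real.log (Lj + Real.sqrt (Lj^2 + ρ^2)) := by
      apply Real.log_le_log (by linarith)
      have := sqrt_ge Lj hLj0
      linarith
    have hlogβ : Real.log (β + Real.sqrt (β^2 + ρ^2)) ≤ Real.log (2*β + ρ) := by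
      apply Real.log_le_log (by positivity)
      have := sqrt_le β hβ0.le
      linarith
    have hlogα : Real.log (α + Real.sqrt (α^2 + ρ^2)) ≤ Real.log (2*α + ρ) := by
      apply Real.log_le_log (by positivity)
      have := sqrt_le α hα0
      linarith
    have hCsplit : C = Real.log (2*α+ρ) + Real.log (2*β+ρ) := by
      rw [hCdef]; exact Real.log_mul h2α.ne' h2β.ne'
    simp only [hBdef]
    apply mul_le_mul_of_nonneg_left _ (by positivity : (0:ℝ) ≤ 1/(4*π))
    rw [div_le_iff₀ hε]
    have hfe : ((∑ p ∈ Finset.Icc (-n₀) (j:ℤ), 1 / Real.sqrt ((-u + (p : ℝ) * ε) ^ 2 + ρ ^ 2)) +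
        (∑ n ∈ Finset.Icc (n₀+1) (j:ℤ), 1 / Real.sqrt ((u + (n : ℝ) * ε) ^ 2 + ρ ^ 2)) -
        (aa ε 0 + 2 * ((harmonic j : ℝ) / ε))) * ε =
        ε * (∑ p ∈ Finset.Icc (-n₀) (j:ℤ), 1 / Real.sqrt ((-u + (p : ℝ) * ε) ^ 2 + ρ ^ 2)) +
        ε * (∑ n ∈ Finset.Icc (n₀+1) (j:ℤ), 1 / Real.sqrt ((u + (n : ℝ) * ε) ^ 2 + ρ ^ 2)) -
        ε * aa ε 0 - 2 * (harmonic j : ℝ) := by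
      field_simp
      ring
    rw [hfe]
    linarith [hR, hL, hlog2R, hlog2L, hlogβ, hlogα]
  have hfin : -(C/(4*π*ε)) ≤ V := le_of_tendsto_of_tendsto hBlim hT hSB
  refine le_trans ?_ hfin
  have hprod : (2*α+ρ)*(2*β+ρ) ≤ (ε+ρ)^2 := by nlinarith [sq_nonneg (α-β)]
  have hερ : 0 < ε + ρ := by linarith
  have hC2 : C ≤ 2*Real.log (ε+ρ) := by
    rw [hCdef]
    calc Real.log ((2*α+ρ)*(2*β+ρ)) ≤ Real.log ((ε+ρ)^2) :=
          Real.log_le_log (mul_pos h2α h2β) hprod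
      _ = 2*Real.log (ε+ρ) := by rw [Real.log_pow]; norm_num
  rw [neg_le_neg_iff, div_le_div_iff₀ (by positivity) (by positivity)]
  nlinarith [mul_le_mul_of_nonneg_right hC2 (by positivity : (0:ℝ) ≤ 2*π*ε)]

/-- Directional derivative of a real-valued function on `ℂ`. -/
noncomputable def cpd (v : ℂ) (f : ℂ → ℝ) (y : ℂ) : ℝ := fderiv ℝ f y v

/-- If `0 < r ≤ 1` and `f` is harmonic on the disc `D_r` with
`f(y) - (1/4π) log|y|² > 0` for `0 < |y| ≤ r`, then `V₀ + f(y)/ε > 0` on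
`(D_r × ℝ) \ ({0} × εℤ)` for all sufficiently small `ε > 0`. -/
theorem statement4
    (a : ℝ → ℤ → ℝ)
    (ha0 : ∀ ε : ℝ, 0 < ε →
      a ε 0 = 2 * (-Real.eulerMascheroniConstant + Real.log (2 * ε)) / ε)
    (ha : ∀ ε : ℝ, 0 < ε → ∀ n : ℤ, n ≠ 0 → a ε n = 1 / ((|n| : ℝ) * ε))
    (V₀ : ℝ → ℝ → ℂ → ℝ)
    (hV : ∀ ε : ℝ, 0 < ε → ∀ (u : ℝ) (y : ℂ),
      ¬ (y = 0 ∧ ∃ n : ℤ, u = (n : ℝ) * ε) → ‖y‖ < 1 →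
      Tendsto (fun j : ℕ => (1 / (4 * π)) * ∑ n ∈ Finset.Icc (-(j : ℤ)) (j : ℤ),
          (1 / Real.sqrt ((u + (n : ℝ) * ε) ^ 2 + ‖y‖ ^ 2) - a ε |n|))
        atTop (nhds (V₀ ε u y)))
    (r : ℝ) (hr0 : 0 < r) (hr1 : r ≤ 1)
    (f : ℂ → ℝ)
    (hfc : ContinuousOn f (closedBall (0:ℂ) r))
    (hharm : ∀ y ∈ ball (0:ℂ) r, ContDiffAt ℝ 2 f y ∧
      cpd 1 (cpd 1 f) y + cpd Complex.I (cpd Complex.I f) y = 0)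
    (hpos : ∀ y : ℂ, 0 < ‖y‖ → ‖y‖ ≤ r →
      0 < f y - (1 / (4 * π)) * Real.log (‖y‖ ^ 2)) :
    ∃ ε₀ : ℝ, 0 < ε₀ ∧ ∀ ε : ℝ, 0 < ε → ε < ε₀ →
      ∀ (u : ℝ) (y : ℂ), ‖y‖ < r →
        ¬ (y = 0 ∧ ∃ n : ℤ, u = (n : ℝ) * ε) →
        0 < V₀ ε u y + f y / ε := by
  have hπ : (0:ℝ) < π := Real.pi_pos
  -- minimum of f on the closed ball
  obtain ⟨z, hz, hzmin⟩ := (isCompact_closedBall (0:ℂ) r).exists_isMinOn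
    ⟨0, mem_closedBall_self hr0.le⟩ hfc
  set m : ℝ := f z with hmdef
  have hm : ∀ w ∈ closedBall (0:ℂ) r, m ≤ f w := fun w hw => hzmin hw
  set ρ₁ : ℝ := min r (Real.exp (2*π*m) / 2) with hρ₁def
  have hρ₁0 : 0 < ρ₁ := lt_min hr0 (by positivity)
  have hρ₁r : ρ₁ ≤ r := min_le_left _ _
  -- minimum of f y - (1/(2π)) log |y| on the annulus
  set K : Set ℂ := closedBall (0:ℂ) r ∩ {w : ℂ | ρ₁ ≤ ‖w‖} with hKdef
  have hKc : IsCompact K :=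
    (isCompact_closedBall (0:ℂ) r).inter_right
      (isClosed_le continuous_const continuous_norm)
  have hKne : K.Nonempty := by
    refine ⟨(r:ℂ), ?_, ?_⟩
    · rw [mem_closedBall_zero_iff, Complex.norm_real, Real.norm_eq_abs, abs_of_pos hr0]
    · simp only [Set.mem_setOf_eq, Complex.norm_real, Real.norm_eq_abs, abs_of_pos hr0]
      exact hρ₁r
  have hKsub : K ⊆ closedBall (0:ℂ) r := Set.inter_subset_left
  have hφc : ContinuousOn (fun w : ℂ => f w - (1/(2*π)) * Real.log (‖w‖)) K := by
    apply ContinuousOn.sub (hfc.mono hKsub)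
    apply ContinuousOn.mul continuousOn_const
    intro w hw
    have hw0 : ‖w‖ ≠ 0 := by
      have := hw.2
      simp only [Set.mem_setOf_eq] at this
      linarith [hρ₁0]
    exact ((Real.continuousAt_log hw0).comp
      continuous_norm.continuousAt).continuousWithinAt
  obtain ⟨w₀, hw₀K, hw₀min⟩ := hKc.exists_isMinOn hKne hφc
  set δ : ℝ := f w₀ - (1/(2*π)) * Real.log (‖w₀‖) with hδdef
  have hw₀pos : 0 < ‖w₀‖ := lt_of_lt_of_le hρ₁0 hw₀K.2
  have hδpos : 0 < δ := by
    have h1 := hpos w₀ hw₀pos (by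
      have := hw₀K.1
      rwa [mem_closedBall_zero_iff] at this)
    have h2 : Real.log (‖w₀‖ ^ 2) = 2 * Real.log (‖w₀‖) := by
      rw [Real.log_pow]; norm_num
    rw [h2] at h1
    have h3 : (1/(4*π)) * (2 * Real.log (‖w₀‖)) =
        (1/(2*π)) * Real.log (‖w₀‖) := by
      field_simp
      ring
    rw [h3] at h1
    exact h1
  have hδK : ∀ w ∈ K, δ ≤ f w - (1/(2*π)) * Real.log (‖w‖) :=
    fun w hw => hw₀min hw
  refine ⟨min (Real.exp (2*π*m) / 2) (2*π*δ*ρ₁), lt_min (by positivity) (by positivity),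
    fun ε hε hεlt u y hyr hexc => ?_⟩
  set ρ : ℝ := ‖y‖ with hρdef
  have hρ0 : 0 ≤ ρ := norm_nonneg y
  have hyball : y ∈ closedBall (0:ℂ) r := by
    rw [mem_closedBall_zero_iff]
    exact le_of_lt hyr
  have hexc' : 0 < ρ ∨ ¬ ∃ n : ℤ, u = (n : ℝ) * ε := by
    by_cases hy : y = 0
    · right
      intro hn
      exact hexc ⟨hy, hn⟩
    · left
      exact norm_pos_iff.2 hy
  have hkey := stmt4_key a ε hε (ha0 ε hε) (ha ε hε) u ρ (V₀ ε u y) hρ0 hexc'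
    (hV ε hε u y hexc (lt_of_lt_of_le hyr hr1))
  -- it suffices to show log (ε + ρ) < 2 π f y
  have hεsince : ε < Real.exp (2*π*m) / 2 := lt_of_lt_of_le hεlt (min_le_left _ _)
  have hεδ : ε < 2*π*δ*ρ₁ := lt_of_lt_of_le hεlt (min_le_right _ _)
  have hlt : Real.log (ε + ρ) < 2*π*(f y) := by
    rcases lt_or_ge ρ ρ₁ with hcase | hcase
    · -- small ρ
      have h1 : ε + ρ < Real.exp (2*π*m) := by
        have h2 : ρ₁ ≤ Real.exp (2*π*m) / 2 := min_le_right _ _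
        linarith
      have h3 : Real.log (ε + ρ) < 2*π*m := by
        rw [Real.log_lt_iff_lt_exp (by linarith)]
        exact h1
      have h4 : m ≤ f y := hm y hyball
      nlinarith
    · -- ρ in the annulus
      have hyK : y ∈ K := ⟨hyball, hcase⟩
      have h1 : δ ≤ f y - (1/(2*π)) * Real.log ρ := hδK y hyK
      have hρpos : 0 < ρ := lt_of_lt_of_le hρ₁0 hcase
      have h2 : Real.log (ε + ρ) - Real.log ρ ≤ ε / ρ := by
        rw [← Real.log_div (by linarith) hρpos.ne']
        have := Real.log_le_sub_one_of_pos (show 0 < (ε+ρ)/ρ by positivity)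
        have he : (ε+ρ)/ρ - 1 = ε/ρ := by field_simp; ring
        linarith [he ▸ this]
      have h3 : ε / ρ ≤ ε / ρ₁ := by
        apply div_le_div_of_nonneg_left hε.le hρ₁0 hcase
      have h4 : ε / ρ₁ < 2*π*δ := by
        rw [div_lt_iff₀ hρ₁0]
        linarith
      have h5 : (2*π) * ((1/(2*π)) * Real.log ρ) = Real.log ρ := by
        field_simp
      nlinarith [h1, h2, h3, h4]
  -- conclude
  have hfinal : 0 < (2*π*(f y) - Real.log (ε + ρ)) / (2*π*ε) :=
    div_pos (by linarith) (by positivity)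
  have heq : (2*π*(f y) - Real.log (ε + ρ)) / (2*π*ε) =
      f y / ε - Real.log (ε + ρ) / (2*π*ε) := by
    field_simp
  rw [heq] at hfinal
  linarith [hkey]
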